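/- (Theorem 4: the backward simulation distance bounds the loss of backward safety.) Let H ⊆ V, let Pre, Post be sets of states, and let R, R_att be binary relations on states (the semantics of the original and of the attacked system) such that W = WP(R, Post) is H-determined. Suppose (i) r = inf{SDist(σ, W) | σ ∈ Pre} with r ∈ ℝ, r > 0, and (ii) R_att and R are at backward simulation distance dd with respect to Post and H, where 0 ≤ dd < r, i.e., for every state σ₁ from which R_att can reach a state outside Post (∃ν₁ ∉ Post with (σ₁, ν₁) ∈ R_att) there exists a state σ₂ from which R can reach a state outside Post (∃ν₂ ∉ Post with (σ₂, ν₂) ∈ R) such that d_H(σ₁, σ₂) ≤ dd. Then inf{SDist(σ, WP(R_att, Post)) | σ ∈ Pre} ≥ r − dd; in particular the degree of backward safety lost due to the attack is at most dd, so the backward robustness ratio δ satisfies δ ≥ (r − dd)/r. -/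

import Mathlib

open scoped BigOperators Classical

variable {V : Type*} [Fintype V]

/-- Euclidean distance between states restricted to the variables in `H`. -/
noncomputable def distH (H : Finset V) (σ σ' : V → ℝ) : ℝ :=
  Real.sqrt (∑ x ∈ H, (σ x - σ' x) ^ 2)

/-- Signed distance of a state to a set of states with respect to a
distance function `δ`, valued in ℝ ∪ {−∞, +∞}. -/
noncomputable def SDistGen (δ : (V → ℝ) → (V → ℝ) → ℝ)
    (σ : V → ℝ) (A : Set (V → ℝ)) : EReal :=
  if σ ∈ A then sInf ((fun σ' => ((δ σ σ' : ℝ) : EReal)) '' Aᶜ)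
  else - sInf ((fun σ' => ((δ σ σ' : ℝ) : EReal)) '' A)

/-- Signed distance with respect to the full Euclidean distance. -/
noncomputable def SDist (σ : V → ℝ) (A : Set (V → ℝ)) : EReal :=
  SDistGen (distH (Finset.univ : Finset V)) σ A

/-- Weakest precondition of a relation with respect to a postcondition. -/
def WP (R : (V → ℝ) → (V → ℝ) → Prop) (B : Set (V → ℝ)) : Set (V → ℝ) :=
  {σ | ∀ ν, R σ ν → ν ∈ B}

omit [Fintype V] in
lemma distH_nonneg (H : Finset V) (σ σ' : V → ℝ) : 0 ≤ distH H σ σ' :=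
  Real.sqrt_nonneg _

omit [Fintype V] in
lemma distH_eq_norm (H : Finset V) (σ σ' : V → ℝ) :
    distH H σ σ' =
      ‖(WithLp.equiv 2 (H → ℝ)).symm (fun x : H => σ x - σ' x)‖ := by
  rw [EuclideanSpace.norm_eq, distH]
  congr 1
  rw [← Finset.sum_coe_sort H (fun x => (σ x - σ' x) ^ 2)]
  simp [sq_abs]

omit [Fintype V] in
lemma distH_triangle (H : Finset V) (a b c : V → ℝ) :
    distH H a c ≤ distH H a b + distH H b c := by
  rw [distH_eq_norm, distH_eq_norm, distH_eq_norm]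
  have h : (WithLp.equiv 2 (H → ℝ)).symm (fun x : H => a x - c x)
      = (WithLp.equiv 2 (H → ℝ)).symm (fun x : H => a x - b x)
        + (WithLp.equiv 2 (H → ℝ)).symm (fun x : H => b x - c x) := by
    ext x
    show a x - c x = (a x - b x) + (b x - c x)
    ring
  rw [h]
  exact norm_add_le _ _

lemma distH_le_univ (H : Finset V) (σ σ' : V → ℝ) :
    distH H σ σ' ≤ distH Finset.univ σ σ' := by
  apply Real.sqrt_le_sqrt
  exact Finset.sum_le_sum_of_subset_of_nonneg (Finset.subset_univ H)
    (fun i _ _ => sq_nonneg _)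

omit [Fintype V] in
lemma distH_self (H : Finset V) (σ : V → ℝ) : distH H σ σ = 0 := by
  simp [distH]

theorem backward_simulation_distance_bounds_backward_safety_loss
    (H : Finset V) (Pre Post : Set (V → ℝ))
    (R Ratt : (V → ℝ) → (V → ℝ) → Prop)
    (hdet : ∀ σ σ' : V → ℝ, (∀ x ∈ H, σ x = σ' x) →
      (σ ∈ WP R Post ↔ σ' ∈ WP R Post))
    (r dd : ℝ) (hr : 0 < r) (hdd : 0 ≤ dd) (hddr : dd < r)
    (hsafe : sInf ((fun σ => SDist σ (WP R Post)) '' Pre) = (r : EReal))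
    (hsim : ∀ σ₁ : V → ℝ, (∃ ν₁ ∉ Post, Ratt σ₁ ν₁) →
      ∃ σ₂ : V → ℝ, (∃ ν₂ ∉ Post, R σ₂ ν₂) ∧ distH H σ₁ σ₂ ≤ dd) :
    ((r - dd : ℝ) : EReal) ≤ sInf ((fun σ => SDist σ (WP Ratt Post)) '' Pre) ∧
    (∀ r₁ : ℝ, sInf ((fun σ => SDist σ (WP Ratt Post)) '' Pre) = (r₁ : EReal) →
      (r - dd) / r ≤ r₁ / r) := by
  set W := WP R Post with hW
  set Wa := WP Ratt Post with hWa
  -- every σ ∈ Pre has SDist σ W ≥ r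
  have hAr : ∀ σ ∈ Pre, (r : EReal) ≤ SDist σ W := by
    intro σ hσ
    rw [← hsafe]
    exact sInf_le ⟨σ, hσ, rfl⟩
  -- every σ ∈ Pre belongs to W
  have hmem : ∀ σ ∈ Pre, σ ∈ W := by
    intro σ hσ
    by_contra hσW
    have h1 := hAr σ hσ
    rw [SDist, SDistGen, if_neg hσW] at h1
    have h2 : (0 : EReal) ≤ sInf ((fun σ' =>
        ((distH Finset.univ σ σ' : ℝ) : EReal)) '' W) := by
      apply le_sInf
      rintro b ⟨σ', _, rfl⟩
      show (0 : EReal) ≤ ((distH Finset.univ σ σ' : ℝ) : EReal)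
      exact_mod_cast distH_nonneg _ _ _
    have h3 : - sInf ((fun σ' =>
        ((distH Finset.univ σ σ' : ℝ) : EReal)) '' W) ≤ 0 := by
      rw [← neg_zero]
      exact EReal.neg_le_neg_iff.mpr h2
    have : (r : EReal) ≤ 0 := le_trans h1 h3
    have : r ≤ 0 := by exact_mod_cast this
    linarith
  -- every σ' ∉ W is at distance ≥ r from any σ ∈ Pre
  have hfar : ∀ σ ∈ Pre, ∀ σ' ∉ W, r ≤ distH Finset.univ σ σ' := by
    intro σ hσ σ' hσ'
    have h1 := hAr σ hσ
    rw [SDist, SDistGen, if_pos (hmem σ hσ)] at h1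
    have h2 : sInf ((fun σ' => ((distH Finset.univ σ σ' : ℝ) : EReal)) '' Wᶜ)
        ≤ ((distH Finset.univ σ σ' : ℝ) : EReal) :=
      sInf_le ⟨σ', hσ', rfl⟩
    exact_mod_cast le_trans h1 h2
  -- key step: every σ'' ∉ Wa is at distance ≥ r - dd from any σ ∈ Pre
  have hkey : ∀ σ ∈ Pre, ∀ σ'' ∉ Wa, r - dd ≤ distH Finset.univ σ σ'' := by
    intro σ hσ σ'' hσ''
    have hex : ∃ ν₁ ∉ Post, Ratt σ'' ν₁ := by
      rw [hWa, WP] at hσ''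
      simp only [Set.mem_setOf_eq, not_forall] at hσ''
      obtain ⟨ν, hν, hνPost⟩ := hσ''
      exact ⟨ν, hνPost, hν⟩
    obtain ⟨σ₂, hσ₂, hdist⟩ := hsim σ'' hex
    have hσ₂W : σ₂ ∉ W := by
      obtain ⟨ν₂, hν₂, hRν₂⟩ := hσ₂
      intro hmem2
      exact hν₂ (hmem2 ν₂ hRν₂)
    -- splice: τ agrees with σ₂ on H and with σ off H
    set τ : V → ℝ := fun x => if x ∈ H then σ₂ x else σ x with hτ
    have hτW : τ ∉ W := by
      intro hτmem
      exact hσ₂W ((hdet τ σ₂ (fun x hx => by simp [hτ, hx])).mp hτmem)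
    have h1 : r ≤ distH Finset.univ σ τ := hfar σ hσ τ hτW
    have h2 : distH Finset.univ σ τ = distH H σ σ₂ := by
      rw [distH, distH]
      congr 1
      rw [← Finset.sum_subset (Finset.subset_univ H)
        (fun x _ hx => by simp [hτ, hx] : ∀ x ∈ Finset.univ,
          x ∉ H → (σ x - τ x) ^ 2 = 0)]
      exact Finset.sum_congr rfl (fun x hx => by simp [hτ, hx])
    have h3 : distH H σ σ₂ ≤ distH H σ σ'' + distH H σ'' σ₂ :=
      distH_triangle H σ σ'' σ₂
    have h4 : distH H σ σ'' ≤ distH Finset.univ σ σ'' := distH_le_univ _ _ _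
    rw [h2] at h1
    linarith
  -- σ ∈ Pre belongs to Wa
  have hmema : ∀ σ ∈ Pre, σ ∈ Wa := by
    intro σ hσ
    by_contra hσWa
    have := hkey σ hσ σ hσWa
    rw [distH_self] at this
    linarith
  have main : ((r - dd : ℝ) : EReal) ≤
      sInf ((fun σ => SDist σ Wa) '' Pre) := by
    apply le_sInf
    rintro b ⟨σ, hσ, rfl⟩
    show ((r - dd : ℝ) : EReal) ≤ SDist σ Wa
    rw [SDist, SDistGen, if_pos (hmema σ hσ)]
    apply le_sInf
    rintro b ⟨σ'', hσ'', rfl⟩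
    show ((r - dd : ℝ) : EReal) ≤ ((distH Finset.univ σ σ'' : ℝ) : EReal)
    exact_mod_cast hkey σ hσ σ'' hσ''
  refine ⟨main, ?_⟩
  intro r₁ hr₁
  rw [hr₁] at main
  have : r - dd ≤ r₁ := by exact_mod_cast main
  gcongr
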